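/- arXiv:nlin/0602042 — 3 statements merged into one kernel-verified Lean document; each statement's English description precedes it below -/
import Mathlib

section
/- Let π = {α_0,…,α_{2r}} be the admissible roots of D_{2r}^{(1)} in ℝ^{2r} and C^# the involution with C^#(e_k) = −e_{2r+1−k}. Then C^# maps α_k ↦ α_{2r−k} for k = 1,…,2r−1 and swaps α_0 with α_{2r} (and α_1 with α_{2r−1}), its (+1)- and (−1)-eigenspaces each have dimension r, and the averages β_k = (1/2)(α_k + C^#(α_k)) give an admissible root system of type A_{2r-1}^{(2)}. -/
lemma eigdim (r : ℕ) (hr : 0 < r) (s : ℝ) (hs : s * s = 1) :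
    Module.finrank ℝ ↥(Module.End.eigenspace
      (-(LinearMap.funLeft ℝ ℝ Fin.rev) : Module.End ℝ (Fin (2*r) → ℝ)) s) = r := by
  have hs0 : s ≠ 0 := by intro h; rw [h] at hs; norm_num at hs
  set C : Module.End ℝ (Fin (2*r) → ℝ) := -(LinearMap.funLeft ℝ ℝ Fin.rev) with hC
  have hmem : ∀ v : Fin (2*r) → ℝ, v ∈ Module.End.eigenspace C s ↔
      ∀ i : Fin (2*r), -v i.rev = s * v i := by
    intro v
    rw [Module.End.mem_eigenspace_iff]
    constructor
    · intro h i; exact congrFun h i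
    · intro h; funext i; exact h i
  set E := Module.End.eigenspace C s
  let ρ : E →ₗ[ℝ] (Fin r → ℝ) :=
    { toFun := fun v j => v.1 ⟨j.1, by omega⟩
      map_add' := fun a b => rfl
      map_smul' := fun c a => rfl }
  have hval : ∀ i : Fin (2*r), ((i.rev : ℕ) = 2*r - ((i:ℕ)+1)) := fun i => Fin.val_rev i
  have hbij : Function.Bijective ρ := by
    constructor
    · intro v w h
      ext i
      have key : ∀ u : E, ∀ j : Fin (2*r), ∀ hj : (j : ℕ) < r, u.1 j = (ρ u) ⟨(j:ℕ), hj⟩ := by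
        intro u j hj
        exact congrArg u.1 (Fin.ext rfl)
      rcases lt_or_ge (i : ℕ) r with hi | hi
      · rw [key v i hi, key w i hi, h]
      · have hc := (hmem v.1).mp v.2 i.rev
        have hcw := (hmem w.1).mp w.2 i.rev
        rw [Fin.rev_rev] at hc hcw
        have hir : (i.rev : ℕ) < r := by rw [hval]; omega
        have hvw : v.1 i.rev = w.1 i.rev := by rw [key v i.rev hir, key w i.rev hir, h]
        have h2 : s * v.1 i = s * w.1 i := by
          have e1 : s * v.1 i = -(s * s * v.1 i.rev) := by
            rw [mul_assoc, ← hc]; ring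
          have e2 : s * w.1 i = -(s * s * w.1 i.rev) := by
            rw [mul_assoc, ← hcw]; ring
          rw [e1, e2, hvw]
        exact mul_left_cancel₀ hs0 h2
    · intro w
      refine ⟨⟨fun i => if h : (i : ℕ) < r then w ⟨i, h⟩ else -s * w ⟨2*r - ((i:ℕ)+1), by omega⟩, ?_⟩, ?_⟩
      · rw [hmem]
        intro i
        rcases lt_or_ge (i : ℕ) r with hi | hi
        · have h1 : ¬ ((i.rev : ℕ) < r) := by rw [hval]; omega
          rw [dif_neg h1, dif_pos hi]
          have he2 : (⟨2*r - ((i.rev:ℕ)+1), by omega⟩ : Fin r) = ⟨(i:ℕ), hi⟩ :=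
            Fin.ext (by simp only [hval]; omega)
          rw [he2]; ring
        · have h1 : ((i.rev : ℕ) < r) := by rw [hval]; omega
          rw [dif_pos h1, dif_neg (by omega)]
          have he : (⟨(i.rev : ℕ), h1⟩ : Fin r) = ⟨2*r - ((i:ℕ)+1), by omega⟩ :=
            Fin.ext (by rw [hval])
          rw [he]
          set x := w ⟨2*r - ((i:ℕ)+1), by omega⟩ with hx
          linear_combination x * hs
      · ext j
        show (if h : ((⟨j.1, by omega⟩ : Fin (2*r)) : ℕ) < r then _ else _) = w j
        rw [dif_pos (by simpa using j.2)]
  rw [(LinearEquiv.ofBijective ρ hbij).finrank_eq, Module.finrank_fin_fun]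

set_option maxHeartbeats 1000000


/-- Folding `D_{2r}^{(1)} → A_{2r-1}^{(2)}`: the involution `C^#(e_k) = -e_{2r+1-k}`
of `ℝ^{2r}` maps `α_k ↦ α_{2r-k}` for `k = 1,…,2r-1` and swaps `α_0 ↔ α_{2r}`; its
`(±1)`-eigenspaces each have dimension `r`, and the averages
`β_k = (α_k + C^#α_k)/2`, `k = 0,…,r`, form the admissible root system of
`A_{2r-1}^{(2)}` with marks `(1,1,2,…,2,1)`:
`β_0 + β_1 + 2β_2 + ⋯ + 2β_{r-1} + β_r = 0`. -/
theorem stmt_10 (r : ℕ) (hr : 3 < r) :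
    let e : ℕ → Fin (2*r) → ℝ := fun k i => if (i : ℕ) = k then 1 else 0
    let α : ℕ → Fin (2*r) → ℝ := fun k =>
      if k = 0 then -e 0 - e 1
      else if k = 2*r then e (2*r-2) + e (2*r-1)
      else e (k-1) - e k
    let Cs : (Fin (2*r) → ℝ) → (Fin (2*r) → ℝ) := fun v i => - v i.rev
    let C : Module.End ℝ (Fin (2*r) → ℝ) := -(LinearMap.funLeft ℝ ℝ Fin.rev)
    let β : ℕ → Fin (2*r) → ℝ := fun k => (1/2 : ℝ) • (α k + Cs (α k))
    (∀ k, 1 ≤ k → k ≤ 2*r-1 → Cs (α k) = α (2*r - k)) ∧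
    (Cs (α 0) = α (2*r)) ∧ (Cs (α (2*r)) = α 0) ∧
    (Module.finrank ℝ ↥(Module.End.eigenspace C 1) = r) ∧
    (Module.finrank ℝ ↥(Module.End.eigenspace C (-1)) = r) ∧
    (β 0 + β 1 + (∑ k ∈ Finset.Icc 2 (r-1), (2:ℝ) • β k) + β r = 0) := by
  intro e α Cs C β
  have hα0 : α 0 = -e 0 - e 1 := by
    simp only [α]; split_ifs <;> first | rfl | (exfalso; omega)
  have hα2r : α (2*r) = e (2*r-2) + e (2*r-1) := by
    simp only [α]; split_ifs <;> first | rfl | (exfalso; omega)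
  have hαmid : ∀ k, 1 ≤ k → k ≤ 2*r-1 → α k = e (k-1) - e k := by
    intro k h1 h2
    simp only [α]; rw [if_neg (by omega), if_neg (by omega)]
  have hmain : ∀ k, 1 ≤ k → k ≤ 2*r-1 → Cs (α k) = α (2*r - k) := by
    intro k h1 h2
    rw [hαmid k h1 h2, hαmid (2*r-k) (by omega) (by omega)]
    funext i
    have hi : (i:ℕ) < 2*r := i.isLt
    simp only [Cs, e, Pi.sub_apply, Fin.val_rev]
    split_ifs <;> first | (exfalso; omega) | norm_num
  refine ⟨hmain, ?_, ?_, ?_, ?_, ?_⟩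
  · rw [hα0, hα2r]
    funext i
    have hi : (i:ℕ) < 2*r := i.isLt
    simp only [Cs, e, Pi.sub_apply, Pi.add_apply, Pi.neg_apply, Fin.val_rev]
    split_ifs <;> first | (exfalso; omega) | norm_num
  · rw [hα0, hα2r]
    funext i
    have hi : (i:ℕ) < 2*r := i.isLt
    simp only [Cs, e, Pi.sub_apply, Pi.add_apply, Pi.neg_apply, Fin.val_rev]
    split_ifs <;> first | (exfalso; omega) | norm_num
  · exact eigdim r (by omega) 1 (by norm_num)
  · exact eigdim r (by omega) (-1) (by norm_num)
  · funext i
    have hi : (i:ℕ) < 2*r := i.isLt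
    have hβmid : ∀ k, 1 ≤ k → k ≤ 2*r-1 →
        β k i = (1/2 : ℝ) * ((if (i:ℕ) = k-1 then 1 else 0) - (if (i:ℕ) = k then 1 else 0)
          - (if 2*r-((i:ℕ)+1) = k-1 then 1 else 0) + (if 2*r-((i:ℕ)+1) = k then 1 else 0)) := by
      intro k h1 h2
      simp only [β, Cs, hαmid k h1 h2, e, Pi.smul_apply, Pi.add_apply, Pi.sub_apply,
        smul_eq_mul, Fin.val_rev]
      ring
    have hβ0 : β 0 i = (1/2 : ℝ) * (-(if (i:ℕ) = 0 then 1 else 0) - (if (i:ℕ) = 1 then 1 else 0)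
        + (if 2*r-((i:ℕ)+1) = 0 then 1 else 0) + (if 2*r-((i:ℕ)+1) = 1 then 1 else 0)) := by
      simp only [β, Cs, hα0, e, Pi.smul_apply, Pi.add_apply, Pi.sub_apply, Pi.neg_apply,
        smul_eq_mul, Fin.val_rev]
      ring
    have hsum : ∑ k ∈ Finset.Icc 2 (r-1), ((2:ℝ) • β k) i =
        (if (i:ℕ)+1 ∈ Finset.Icc 2 (r-1) then (1:ℝ) else 0)
        - (if (i:ℕ) ∈ Finset.Icc 2 (r-1) then 1 else 0)
        - (if 2*r-(i:ℕ) ∈ Finset.Icc 2 (r-1) then 1 else 0)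
        + (if 2*r-1-(i:ℕ) ∈ Finset.Icc 2 (r-1) then 1 else 0) := by
      have step : ∀ k ∈ Finset.Icc 2 (r-1), ((2:ℝ) • β k) i =
          (if k = (i:ℕ)+1 then (1:ℝ) else 0) - (if k = (i:ℕ) then 1 else 0)
          - (if k = 2*r-(i:ℕ) then 1 else 0) + (if k = 2*r-1-(i:ℕ) then 1 else 0) := by
        intro k hk
        simp only [Finset.mem_Icc] at hk
        rw [Pi.smul_apply, smul_eq_mul, hβmid k (by omega) (by omega)]
        split_ifs <;> first | (exfalso; omega) | norm_num
      rw [Finset.sum_congr rfl step, Finset.sum_add_distrib, Finset.sum_sub_distrib,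
        Finset.sum_sub_distrib, Finset.sum_ite_eq' (Finset.Icc 2 (r-1)) ((i:ℕ)+1) (fun _ => (1:ℝ)),
        Finset.sum_ite_eq' (Finset.Icc 2 (r-1)) ((i:ℕ)) (fun _ => (1:ℝ)),
        Finset.sum_ite_eq' (Finset.Icc 2 (r-1)) (2*r-(i:ℕ)) (fun _ => (1:ℝ)),
        Finset.sum_ite_eq' (Finset.Icc 2 (r-1)) (2*r-1-(i:ℕ)) (fun _ => (1:ℝ))]
    rw [Pi.zero_apply, Pi.add_apply, Pi.add_apply, Pi.add_apply, Finset.sum_apply, hsum,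
      hβ0, hβmid 1 (by omega) (by omega), hβmid r (by omega) (by omega)]
    simp only [Finset.mem_Icc]
    rcases (show (i:ℕ) = 0 ∨ (i:ℕ) = 1 ∨ (2 ≤ (i:ℕ) ∧ (i:ℕ) ≤ r-2) ∨ (i:ℕ) = r-1 ∨ (i:ℕ) = r ∨ (r+1 ≤ (i:ℕ) ∧ (i:ℕ) ≤ 2*r-3) ∨ (i:ℕ) = 2*r-2 ∨ (i:ℕ) = 2*r-1 by omega) with h|h|h|h|h|h|h|h
    · simp only [Nat.sub_self, eq_true (show (i:ℕ) = 0 by omega), eq_false (show ¬((i:ℕ) = 1) by omega), eq_false (show ¬(2*r - ((i:ℕ)+1) = 0) by omega), eq_false (show ¬(2*r - ((i:ℕ)+1) = 1) by omega), eq_false (show ¬((i:ℕ) = r-1) by omega), eq_false (show ¬((i:ℕ) = r) by omega), eq_false (show ¬(2*r - ((i:ℕ)+1) = r-1) by omega), eq_false (show ¬(2*r - ((i:ℕ)+1) = r) by omega), eq_false (show ¬(2 ≤ (i:ℕ)+1 ∧ (i:ℕ)+1 ≤ r-1) by omega), eq_false (show ¬(2 ≤ (i:ℕ) ∧ (i:ℕ)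 ≤ r-1) by omega), eq_false (show ¬(2 ≤ 2*r-(i:ℕ) ∧ 2*r-(i:ℕ) ≤ r-1) by omega), eq_false (show ¬(2 ≤ 2*r-1-(i:ℕ) ∧ 2*r-1-(i:ℕ) ≤ r-1) by omega), if_true, if_false]
      norm_num
    · simp only [Nat.sub_self, eq_false (show ¬((i:ℕ) = 0) by omega), eq_true (show (i:ℕ) = 1 by omega), eq_false (show ¬(2*r - ((i:ℕ)+1) = 0) by omega), eq_false (show ¬(2*r - ((i:ℕ)+1) = 1) by omega), eq_false (show ¬((i:ℕ) = r-1) by omega), eq_false (show ¬((i:ℕ) = r) by omega), eq_false (show ¬(2*r - ((i:ℕ)+1) = r-1) by omega), eq_false (show ¬(2*r - ((i:ℕ)+1) = r) by omega), eq_true (show 2 ≤ (i:ℕ)+1 ∧ (i:ℕ)+1 ≤ r-1 by omega), eq_false (show ¬(2 ≤ (i:ℕ) ∧ (i:ℕ) ≤ r-1) by omega), eq_false (show ¬(2 ≤ 2*r-(i:ℕ) ∧ 2*r-(i:ℕ) ≤ r-1) by omega), eq_false (show ¬(2 ≤ 2*r-1-(i:ℕ) ∧ 2*r-1-(i:ℕ)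 ≤ r-1) by omega), if_true, if_false]
      norm_num
    · simp only [Nat.sub_self, eq_false (show ¬((i:ℕ) = 0) by omega), eq_false (show ¬((i:ℕ) = 1) by omega), eq_false (show ¬(2*r - ((i:ℕ)+1) = 0) by omega), eq_false (show ¬(2*r - ((i:ℕ)+1) = 1) by omega), eq_false (show ¬((i:ℕ) = r-1) by omega), eq_false (show ¬((i:ℕ) = r) by omega), eq_false (show ¬(2*r - ((i:ℕ)+1) = r-1) by omega), eq_false (show ¬(2*r - ((i:ℕ)+1) = r) by omega), eq_true (show 2 ≤ (i:ℕ)+1 ∧ (i:ℕ)+1 ≤ r-1 by omega), eq_true (show 2 ≤ (i:ℕ) ∧ (i:ℕ) ≤ r-1 by omega), eq_false (show ¬(2 ≤ 2*r-(i:ℕ) ∧ 2*r-(i:ℕ) ≤ r-1) by omega), eq_false (show ¬(2 ≤ 2*r-1-(i:ℕ) ∧ 2*r-1-(i:ℕ) ≤ r-1) by omega), if_true, if_false]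
      norm_num
    · simp only [Nat.sub_self, eq_false (show ¬((i:ℕ) = 0) by omega), eq_false (show ¬((i:ℕ) = 1) by omega), eq_false (show ¬(2*r - ((i:ℕ)+1) = 0) by omega), eq_false (show ¬(2*r - ((i:ℕ)+1) = 1) by omega), eq_true (show (i:ℕ) = r-1 by omega), eq_false (show ¬((i:ℕ) = r) by omega), eq_false (show ¬(2*r - ((i:ℕ)+1) = r-1) by omega), eq_true (show 2*r - ((i:ℕ)+1) = r by omega), eq_false (show ¬(2 ≤ (i:ℕ)+1 ∧ (i:ℕ)+1 ≤ r-1) by omega), eq_true (show 2 ≤ (i:ℕ) ∧ (i:ℕ) ≤ r-1 by omega), eq_false (show ¬(2 ≤ 2*r-(i:ℕ) ∧ 2*r-(i:ℕ) ≤ r-1) by omega), eq_false (show ¬(2 ≤ 2*r-1-(i:ℕ) ∧ 2*r-1-(i:ℕ) ≤ r-1) by omega), if_true, if_false]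
      norm_num
    · simp only [Nat.sub_self, eq_false (show ¬((i:ℕ) = 0) by omega), eq_false (show ¬((i:ℕ) = 1) by omega), eq_false (show ¬(2*r - ((i:ℕ)+1) = 0) by omega), eq_false (show ¬(2*r - ((i:ℕ)+1) = 1) by omega), eq_false (show ¬((i:ℕ) = r-1) by omega), eq_true (show (i:ℕ) = r by omega), eq_true (show 2*r - ((i:ℕ)+1) = r-1 by omega), eq_false (show ¬(2*r - ((i:ℕ)+1) = r) by omega), eq_false (show ¬(2 ≤ (i:ℕ)+1 ∧ (i:ℕ)+1 ≤ r-1) by omega), eq_false (show ¬(2 ≤ (i:ℕ) ∧ (i:ℕ) ≤ r-1) by omega), eq_false (show ¬(2 ≤ 2*r-(i:ℕ) ∧ 2*r-(i:ℕ) ≤ r-1) by omega), eq_true (show 2 ≤ 2*r-1-(i:ℕ) ∧ 2*r-1-(i:ℕ) ≤ r-1 by omega), if_true, if_false]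
      norm_num
    · simp only [Nat.sub_self, eq_false (show ¬((i:ℕ) = 0) by omega), eq_false (show ¬((i:ℕ) = 1) by omega), eq_false (show ¬(2*r - ((i:ℕ)+1) = 0) by omega), eq_false (show ¬(2*r - ((i:ℕ)+1) = 1) by omega), eq_false (show ¬((i:ℕ) = r-1) by omega), eq_false (show ¬((i:ℕ) = r) by omega), eq_false (show ¬(2*r - ((i:ℕ)+1) = r-1) by omega), eq_false (show ¬(2*r - ((i:ℕ)+1) = r) by omega), eq_false (show ¬(2 ≤ (i:ℕ)+1 ∧ (i:ℕ)+1 ≤ r-1) by omega), eq_false (show ¬(2 ≤ (i:ℕ) ∧ (i:ℕ) ≤ r-1) by omega), eq_true (show 2 ≤ 2*r-(i:ℕ) ∧ 2*r-(i:ℕ) ≤ r-1 by omega), eq_true (show 2 ≤ 2*r-1-(i:ℕ) ∧ 2*r-1-(i:ℕ) ≤ r-1 by omega), if_true, if_false]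
      norm_num
    · simp only [Nat.sub_self, eq_false (show ¬((i:ℕ) = 0) by omega), eq_false (show ¬((i:ℕ) = 1) by omega), eq_false (show ¬(2*r - ((i:ℕ)+1) = 0) by omega), eq_true (show 2*r - ((i:ℕ)+1) = 1 by omega), eq_false (show ¬((i:ℕ) = r-1) by omega), eq_false (show ¬((i:ℕ) = r) by omega), eq_false (show ¬(2*r - ((i:ℕ)+1) = r-1) by omega), eq_false (show ¬(2*r - ((i:ℕ)+1) = r) by omega), eq_false (show ¬(2 ≤ (i:ℕ)+1 ∧ (i:ℕ)+1 ≤ r-1) by omega), eq_false (show ¬(2 ≤ (i:ℕ) ∧ (i:ℕ) ≤ r-1) by omega), eq_true (show 2 ≤ 2*r-(i:ℕ) ∧ 2*r-(i:ℕ) ≤ r-1 by omega), eq_false (show ¬(2 ≤ 2*r-1-(i:ℕ) ∧ 2*r-1-(i:ℕ) ≤ r-1) by omega), if_true, if_false]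
      norm_num
    · simp only [Nat.sub_self, eq_false (show ¬((i:ℕ) = 0) by omega), eq_false (show ¬((i:ℕ) = 1) by omega), eq_true (show 2*r - ((i:ℕ)+1) = 0 by omega), eq_false (show ¬(2*r - ((i:ℕ)+1) = 1) by omega), eq_false (show ¬((i:ℕ) = r-1) by omega), eq_false (show ¬((i:ℕ) = r) by omega), eq_false (show ¬(2*r - ((i:ℕ)+1) = r-1) by omega), eq_false (show ¬(2*r - ((i:ℕ)+1) = r) by omega), eq_false (show ¬(2 ≤ (i:ℕ)+1 ∧ (i:ℕ)+1 ≤ r-1) by omega), eq_false (show ¬(2 ≤ (i:ℕ) ∧ (i:ℕ) ≤ r-1) by omega), eq_false (show ¬(2 ≤ 2*r-(i:ℕ) ∧ 2*r-(i:ℕ) ≤ r-1) by omega), eq_false (show ¬(2 ≤ 2*r-1-(i:ℕ) ∧ 2*r-1-(i:ℕ) ≤ r-1) by omega), if_true, if_false]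
      norm_num
end

section
/- Fix the admissible roots of A_{2r}^{(1)} in ℝ^{2r+1}: α_k = e_k − e_{k+1} (k = 1,…,2r), α_0 = e_{2r+1} − e_1, and the involution C^#(e_k) = −e_{2r+2−k} for k = 1,…,2r+1 (so C^#(e_{r+1}) = −e_{r+1}). Then C^# fixes α_0 and maps α_k ↦ α_{2r+1−k} for k = 1,…,2r, the (+1)-eigenspace of C^# restricted to the span of the root system has dimension r, and the nonzero averages β_k = (1/2)(α_k + C^#(α_k)) form an admissible root system of type A_{2r}^{(2)}. -/
/-- Folding `A_{2r}^{(1)} → A_{2r}^{(2)}`: the involution `C^#(e_k) = -e_{2r+2-k}`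
of `ℝ^{2r+1}` fixes `α_0` and maps `α_k ↦ α_{2r+1-k}`; the `(+1)`-eigenspace meets
the span of the root system (the zero-sum hyperplane `V`) in dimension `r`, and the
nonzero averages `β_k = (α_k + C^#α_k)/2`, `k = 0,…,r`, form the admissible root
system of `A_{2r}^{(2)}` with marks `(1,2,…,2)`: `β_0 + 2β_1 + ⋯ + 2β_r = 0`. -/
theorem stmt_15 (r : ℕ) (hr : 1 ≤ r) :
    let e : ℕ → Fin (2*r+1) → ℝ := fun k i => if (i : ℕ) = k then 1 else 0
    let α : ℕ → Fin (2*r+1) → ℝ := fun k =>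
      if k = 0 then e (2*r) - e 0 else e (k-1) - e k
    let Cs : (Fin (2*r+1) → ℝ) → (Fin (2*r+1) → ℝ) := fun v i => - v i.rev
    let C : Module.End ℝ (Fin (2*r+1) → ℝ) := -(LinearMap.funLeft ℝ ℝ Fin.rev)
    let V : Submodule ℝ (Fin (2*r+1) → ℝ) :=
      LinearMap.ker (∑ i, LinearMap.proj i : (Fin (2*r+1) → ℝ) →ₗ[ℝ] ℝ)
    let β : ℕ → Fin (2*r+1) → ℝ := fun k => (1/2 : ℝ) • (α k + Cs (α k))
    (Cs (α 0) = α 0) ∧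
    (∀ k, 1 ≤ k → k ≤ 2*r → Cs (α k) = α (2*r+1 - k)) ∧
    (Module.finrank ℝ ↥(Module.End.eigenspace C 1 ⊓ V) = r) ∧
    (∀ k ≤ r, β k ≠ 0) ∧
    (β 0 + ∑ k ∈ Finset.Icc 1 r, (2:ℝ) • β k = 0) := by
  intro e α Cs C V β
  have hrev : ∀ i : Fin (2*r+1), (i.rev : ℕ) = 2*r - (i : ℕ) := by
    intro i; rw [Fin.val_rev]; omega
  -- Part 1
  have h0 : Cs (α 0) = α 0 := by
    funext i
    have hi : (i : ℕ) < 2*r+1 := i.isLt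
    have c1 : (2*r - (i:ℕ) = 2*r) ↔ ((i:ℕ) = 0) := by omega
    have c2 : (2*r - (i:ℕ) = 0) ↔ ((i:ℕ) = 2*r) := by omega
    simp only [Cs, α, e, if_pos rfl, Pi.sub_apply, hrev, c1, c2]
    by_cases h1 : (i:ℕ) = 0 <;> by_cases h2 : (i:ℕ) = 2*r <;>
      simp [h1, h2] <;> omega
  -- Part 2
  have h2 : ∀ k, 1 ≤ k → k ≤ 2*r → Cs (α k) = α (2*r+1 - k) := by
    intro k hk1 hk2
    funext i
    have hi : (i : ℕ) < 2*r+1 := i.isLt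
    have hk0 : k ≠ 0 := by omega
    have hk0' : 2*r+1-k ≠ 0 := by omega
    have c1 : (2*r - (i:ℕ) = k-1) ↔ ((i:ℕ) = 2*r+1-k) := by omega
    have c2 : (2*r - (i:ℕ) = k) ↔ ((i:ℕ) = 2*r-k) := by omega
    have c3 : 2*r+1-k-1 = 2*r-k := by omega
    simp only [Cs, α, e, if_neg hk0, if_neg hk0', Pi.sub_apply, hrev, c1, c2, c3]
    by_cases h1 : (i:ℕ) = 2*r+1-k <;> by_cases h2 : (i:ℕ) = 2*r-k <;>
      simp [h1, h2] <;> omega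
  -- Part 3
  have hCapp : ∀ (v : Fin (2*r+1) → ℝ) (i : Fin (2*r+1)), C v i = -(v i.rev) := by
    intro v i
    simp [C, LinearMap.funLeft_apply]
  have hmem : ∀ v, v ∈ Module.End.eigenspace C 1 ↔ ∀ i, -(v i.rev) = v i := by
    intro v
    rw [Module.End.mem_eigenspace_iff, one_smul]
    constructor
    · intro h i; rw [← hCapp]; rw [h]
    · intro h; funext i; rw [hCapp]; exact h i
  have hSV : Module.End.eigenspace C 1 ≤ V := by
    intro v hv
    rw [hmem] at hv
    have hsum : ∑ i, v (Fin.rev i) = ∑ i, v i :=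
      Fintype.sum_bijective Fin.rev Fin.rev_bijective (fun i => v (Fin.rev i)) v
        (fun i => rfl)
    have heq : ∑ i, v i = -∑ i, v i := by
      calc ∑ i, v i = ∑ i, -(v (Fin.rev i)) :=
            Finset.sum_congr rfl (fun i _ => (hv i).symm)
        _ = -∑ i, v (Fin.rev i) := by rw [Finset.sum_neg_distrib]
        _ = -∑ i, v i := by rw [hsum]
    have hz : ∑ i, v i = 0 := by linarith
    simp only [V, LinearMap.mem_ker, LinearMap.sum_apply, LinearMap.proj_apply]
    exact hz
  have hinf : Module.End.eigenspace C 1 ⊓ V = Module.End.eigenspace C 1 :=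
    inf_eq_left.mpr hSV
  let equ : ↥(Module.End.eigenspace C 1) ≃ₗ[ℝ] (Fin r → ℝ) :=
    { toFun := fun v j => v.1 ⟨j, by omega⟩
      invFun := fun f =>
        ⟨fun i => if h : (i:ℕ) < r then f ⟨i, h⟩
          else if h' : 2*r - (i:ℕ) < r then -f ⟨2*r - (i:ℕ), h'⟩ else 0, by
          rw [hmem]
          intro i
          have hi : (i : ℕ) < 2*r+1 := i.isLt
          have hri : (i.rev : ℕ) = 2*r - (i:ℕ) := hrev i
          rcases lt_trichotomy ((i:ℕ)) r with h | h | h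
          · have hA : ¬ ((i.rev : ℕ) < r) := by omega
            have hB : 2*r - (i.rev : ℕ) < r := by omega
            rw [dif_pos h, dif_neg hA, dif_pos hB, neg_neg]
            exact congrArg f (Fin.ext (by simp only [hri]; omega))
          · have hA : ¬ ((i:ℕ) < r) := by omega
            have hA' : ¬ ((i.rev : ℕ) < r) := by omega
            have hB : ¬ (2*r - (i:ℕ) < r) := by omega
            have hB' : ¬ (2*r - (i.rev : ℕ) < r) := by omega
            rw [dif_neg hA, dif_neg hA', dif_neg hB, dif_neg hB', neg_zero]
          · have hA : ¬ ((i:ℕ) < r) := by omega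
            have hB : 2*r - (i:ℕ) < r := by omega
            have hC : (i.rev : ℕ) < r := by omega
            rw [dif_neg hA, dif_pos hB, dif_pos hC]
            exact congrArg (fun x => -(f x)) (Fin.ext hri)⟩
      left_inv := by
        rintro ⟨v, hv⟩
        rw [hmem] at hv
        apply Subtype.ext
        funext i
        have hi : (i : ℕ) < 2*r+1 := i.isLt
        show (if h : (i:ℕ) < r then _ else _) = v i
        rcases lt_trichotomy ((i:ℕ)) r with h | h | h
        · rw [dif_pos h]
        · have hA : ¬ ((i:ℕ) < r) := by omega
          have hB : ¬ (2*r - (i:ℕ) < r) := by omega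
          rw [dif_neg hA, dif_neg hB]
          have hir : i.rev = i := Fin.ext (by rw [hrev]; omega)
          have hfix := hv i
          rw [hir] at hfix
          linarith
        · have hA : ¬ ((i:ℕ) < r) := by omega
          have hB : 2*r - (i:ℕ) < r := by omega
          rw [dif_neg hA, dif_pos hB, ← hv i]
          exact congrArg (fun x => -(v x)) (Fin.ext (by rw [hrev]))
      right_inv := by
        intro f
        funext j
        have hj : ((⟨(j:ℕ), by omega⟩ : Fin (2*r+1)) : ℕ) < r := j.isLt
        show (if h : _ then _ else _) = f j
        rw [dif_pos hj]
      map_add' := by intro x y; rfl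
      map_smul' := by intro c x; rfl }
  have h3 : Module.finrank ℝ ↥(Module.End.eigenspace C 1 ⊓ V) = r := by
    rw [hinf, equ.finrank_eq, Module.finrank_pi, Fintype.card_fin]
  -- Part 4
  have hb0 : β 0 = α 0 := by
    simp only [β, h0]
    funext i
    simp only [Pi.smul_apply, Pi.add_apply, smul_eq_mul]
    ring
  have h4 : ∀ k ≤ r, β k ≠ 0 := by
    intro k hk hzero
    rcases Nat.eq_zero_or_pos k with hk0 | hk1
    · subst hk0
      rw [hb0] at hzero
      have hc := congrFun hzero ⟨0, by omega⟩
      simp only [α, e, if_pos rfl, Pi.sub_apply, Pi.zero_apply] at hc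
      rw [if_neg (show ¬ ((⟨0, by omega⟩ : Fin (2*r+1)) : ℕ) = 2*r by
        simp; omega)] at hc
      norm_num at hc
    · have hCs : Cs (α k) = α (2*r+1-k) := h2 k hk1 (by omega)
      have hzero' : (1/2:ℝ) • (α k + α (2*r+1-k)) = 0 := by
        rw [← hCs]; exact hzero
      have hk0 : k ≠ 0 := by omega
      have hk0' : 2*r+1-k ≠ 0 := by omega
      have c3 : 2*r+1-k-1 = 2*r-k := by omega
      have hc := congrFun hzero' ⟨k-1, by omega⟩
      have e2 : ¬ (k-1 = k) := by omega
      have e3 : ¬ (k-1 = 2*r-k) := by omega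
      have e4 : ¬ (k-1 = 2*r+1-k) := by omega
      simp only [α, e, if_neg hk0, if_neg hk0', c3, Pi.smul_apply, Pi.add_apply,
        Pi.sub_apply, Pi.zero_apply, smul_eq_mul, Fin.val_mk] at hc
      rw [if_neg e2, if_neg e3, if_neg e4] at hc
      norm_num at hc
  -- Part 5
  let g : ℕ → Fin (2*r+1) → ℝ := fun j => -(e j) + e (2*r - j)
  have hg : ∀ j, g j = -(e j) + e (2*r - j) := fun _ => rfl
  have hstep : ∀ j < r, (2:ℝ) • β (j+1) = g (j+1) - g j := by
    intro j hj
    have hCs : Cs (α (j+1)) = α (2*r+1-(j+1)) := h2 (j+1) (by omega) (by omega)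
    have h2b : (2:ℝ) • β (j+1) = α (j+1) + Cs (α (j+1)) := by
      simp only [β, smul_smul]
      norm_num
    have hj1 : (j+1 : ℕ) ≠ 0 := by omega
    have hA1 : α (j+1) = e j - e (j+1) := by
      simp only [α, if_neg hj1, Nat.add_sub_cancel]
    have hm : 2*r+1-(j+1) = 2*r - j := by omega
    have hm1 : (2*r - j) - 1 = 2*r - (j+1) := by omega
    have hA2 : α (2*r+1-(j+1)) = e (2*r-(j+1)) - e (2*r-j) := by
      rw [hm]; simp only [α]; rw [if_neg (show 2*r-j ≠ 0 by omega), hm1]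
    rw [h2b, hCs, hA1, hA2, hg (j+1), hg j]
    abel
  have hIcc : ∑ k ∈ Finset.Icc 1 r, (2:ℝ) • β k
      = ∑ j ∈ Finset.range r, (g (j+1) - g j) := by
    rw [show Finset.Icc 1 r = Finset.Ico 1 (r+1) from rfl,
      Finset.sum_Ico_eq_sum_range]
    apply Finset.sum_congr rfl
    intro j hj
    rw [Finset.mem_range] at hj
    rw [show 1 + j = j + 1 from by omega]
    exact hstep j (by omega)
  refine ⟨h0, h2, h3, h4, ?_⟩
  rw [hIcc, Finset.sum_range_sub g r, hb0, hg r, hg 0,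
    show 2*r - r = r from by omega]
  simp only [α, if_pos rfl, Nat.sub_zero]
  abel
end

section
/- Let π = {α_0,…,α_{2r+1}} be the admissible roots of D_{2r+1}^{(1)} in ℝ^{2r+1} and C^# the involution with C^#(e_k) = −e_{2r+2−k} (so C^#(e_{r+1}) = −e_{r+1}). Then C^# maps α_k ↦ α_{2r+1−k} for k = 0,…,2r+1 and its (+1)-eigenspace has dimension r while its (−1)-eigenspace has dimension r+1; the averages β_k = (1/2)(α_k + C^#(α_k)), k = 0,…,r, form an admissible root system of type B_r^{(1)}. -/
set_option maxHeartbeats 1000000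

/-- Folding `D_{2r+1}^{(1)} → B_r^{(1)}`: the involution `C^#(e_k) = -e_{2r+2-k}`
of `ℝ^{2r+1}` maps each admissible root `α_k` of `D_{2r+1}^{(1)}` to `α_{2r+1-k}`;
its `(+1)`-eigenspace has dimension `r` and its `(-1)`-eigenspace dimension `r+1`;
the averages `β_k = (α_k + C^#α_k)/2`, `k = 0,…,r`, form the admissible root system
of `B_r^{(1)}`: `β_0 + β_1 + 2β_2 + ⋯ + 2β_r = 0`. -/
theorem stmt_16 (r : ℕ) (hr : 2 ≤ r) :
    let e : ℕ → Fin (2*r+1) → ℝ := fun k i => if (i : ℕ) = k then 1 else 0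
    let α : ℕ → Fin (2*r+1) → ℝ := fun k =>
      if k = 0 then -e 0 - e 1
      else if k = 2*r+1 then e (2*r-1) + e (2*r)
      else e (k-1) - e k
    let Cs : (Fin (2*r+1) → ℝ) → (Fin (2*r+1) → ℝ) := fun v i => - v i.rev
    let C : Module.End ℝ (Fin (2*r+1) → ℝ) := -(LinearMap.funLeft ℝ ℝ Fin.rev)
    let β : ℕ → Fin (2*r+1) → ℝ := fun k => (1/2 : ℝ) • (α k + Cs (α k))
    (∀ k ≤ 2*r+1, Cs (α k) = α (2*r+1 - k)) ∧
    (Module.finrank ℝ ↥(Module.End.eigenspace C 1) = r) ∧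
    (Module.finrank ℝ ↥(Module.End.eigenspace C (-1)) = r + 1) ∧
    (β 0 + β 1 + ∑ k ∈ Finset.Icc 2 r, (2:ℝ) • β k = 0) := by
  intro e α Cs C β
  have hC2 : ∀ x, C (C x) = x := by
    intro x
    funext i
    simp [C, LinearMap.funLeft_apply, Fin.rev_rev]
  have hrfin : (r : ℕ) < 2*r+1 := by omega
  have htrC : LinearMap.trace ℝ (Fin (2*r+1) → ℝ) C = -1 := by
    classical
    rw [LinearMap.trace_eq_matrix_trace ℝ (Pi.basisFun ℝ (Fin (2*r+1)))]
    have hdiag : ∀ i : Fin (2*r+1),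
        (LinearMap.toMatrix (Pi.basisFun ℝ (Fin (2*r+1))) (Pi.basisFun ℝ (Fin (2*r+1))) C) i i
          = -(if i = (⟨r, hrfin⟩ : Fin (2*r+1)) then (1:ℝ) else 0) := by
      intro i
      rw [LinearMap.toMatrix_apply]
      simp only [Pi.basisFun_apply, Pi.basisFun_repr, C, LinearMap.neg_apply,
        LinearMap.funLeft_apply, Pi.neg_apply]
      have hcond : (Fin.rev i = i) = (i = (⟨r, hrfin⟩ : Fin (2*r+1))) := by
        have hi := i.isLt
        apply propext
        simp only [Fin.ext_iff, Fin.val_rev]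
        constructor <;> intro h <;> omega
      rw [Pi.single_apply]
      simp only [hcond]
    rw [Matrix.trace]
    simp only [Matrix.diag_apply]
    rw [Finset.sum_congr rfl (fun i _ => hdiag i)]
    rw [Finset.sum_neg_distrib, Finset.sum_ite_eq' Finset.univ (⟨r, hrfin⟩ : Fin (2*r+1))]
    simp
  have htr1 : LinearMap.trace ℝ (Fin (2*r+1) → ℝ) LinearMap.id = ((2*r+1 : ℕ) : ℝ) := by
    rw [LinearMap.trace_id, Module.finrank_fin_fun]
  have hCs : ∀ k ≤ 2*r+1, Cs (α k) = α (2*r+1 - k) := by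
    intro k hk
    funext i
    have hi := i.isLt
    simp only [Cs, α, e, Fin.val_rev, ite_apply, Pi.add_apply, Pi.sub_apply, Pi.neg_apply]
    split_ifs <;> first | omega | norm_num
  refine ⟨hCs, ?_, ?_, ?_⟩
  · -- (+1)-eigenspace has dimension r
    set P : Module.End ℝ (Fin (2*r+1) → ℝ) := (2:ℝ)⁻¹ • (LinearMap.id + C) with hP
    have hproj : LinearMap.IsProj (Module.End.eigenspace C 1) P := by
      constructor
      · intro x
        rw [Module.End.mem_eigenspace_iff]
        have : C (P x) = (2:ℝ)⁻¹ • (C x + x) := by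
          simp [hP, map_add, map_smul, hC2 x]
        rw [this]
        simp [hP]
        module
      · intro x hx
        rw [Module.End.mem_eigenspace_iff] at hx
        rw [one_smul] at hx
        simp [hP, hx]
        module
    have htr : LinearMap.trace ℝ _ P = (Module.finrank ℝ ↥(Module.End.eigenspace C 1) : ℝ) :=
      hproj.trace
    rw [hP, map_smul, map_add, htr1, htrC, smul_eq_mul] at htr
    have : (Module.finrank ℝ ↥(Module.End.eigenspace C 1) : ℝ) = (r : ℝ) := by
      rw [← htr]; push_cast; ring
    exact_mod_cast this
  · -- (-1)-eigenspace has dimension r+1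
    set P : Module.End ℝ (Fin (2*r+1) → ℝ) := (2:ℝ)⁻¹ • (LinearMap.id - C) with hP
    have hproj : LinearMap.IsProj (Module.End.eigenspace C (-1)) P := by
      constructor
      · intro x
        rw [Module.End.mem_eigenspace_iff]
        have : C (P x) = (2:ℝ)⁻¹ • (C x - x) := by
          simp [hP, map_sub, map_smul, hC2 x]
        rw [this]
        simp [hP]
        module
      · intro x hx
        rw [Module.End.mem_eigenspace_iff] at hx
        simp [hP, hx]
        module
    have htr : LinearMap.trace ℝ _ P = (Module.finrank ℝ ↥(Module.End.eigenspace C (-1)) : ℝ) :=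
      hproj.trace
    rw [hP, map_smul, map_sub, htr1, htrC, smul_eq_mul] at htr
    have : (Module.finrank ℝ ↥(Module.End.eigenspace C (-1)) : ℝ) = ((r : ℝ) + 1) := by
      rw [← htr]; push_cast; ring
    exact_mod_cast this
  · -- the B_r^(1) relation
    classical
    have hα : ∀ k, 1 ≤ k → k ≤ 2*r → α k = e (k-1) - e k := by
      intro k h1 h2
      simp only [α]
      rw [if_neg (by omega), if_neg (by omega)]
    have hα0 : α 0 = -e 0 - e 1 := by
      simp only [α]
      simp
    have hα2r1 : α (2*r+1) = e (2*r-1) + e (2*r) := by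
      simp only [α]
      rw [if_neg (by omega)]
      simp
    have h2βs : ∀ k ≤ 2*r+1, (2:ℝ) • β k = α k + α (2*r+1-k) := by
      intro k hk
      have h : (2:ℝ) • β k = α k + Cs (α k) := by
        simp only [β, smul_smul]
        norm_num
      rw [h, hCs k hk]
    set F : ℕ → Fin (2*r+1) → ℝ := fun k => e (k-1) - e (2*r+1-k) with hF
    have h2β : ∀ k ∈ Finset.Icc 2 r, (2:ℝ) • β k = F k - F (k+1) := by
      intro k hk
      rw [Finset.mem_Icc] at hk
      rw [h2βs k (by omega), hα k (by omega) (by omega),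
        hα (2*r+1-k) (by omega) (by omega)]
      simp only [hF]
      have h3 : 2*r+1-k-1 = 2*r-k := by omega
      have h4 : 2*r+1-(k+1) = 2*r-k := by omega
      have h5 : k+1-1 = k := by omega
      rw [h3, h4, h5]
      abel
    rw [Finset.sum_congr rfl h2β]
    have htel : ∑ k ∈ Finset.Icc 2 r, (F k - F (k+1)) = F 2 - F (r+1) := by
      rw [← Finset.Ico_add_one_right_eq_Icc, Finset.sum_Ico_eq_sum_range]
      have h1 : r + 1 - 2 = r - 1 := by omega
      rw [h1]
      have h2 : 2 + (r - 1) = r + 1 := by omega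
      have := Finset.sum_range_sub' (fun j => F (2+j)) (r-1)
      simp only [Nat.add_zero, ← Nat.add_assoc, h2] at this
      exact this
    rw [htel]
    have hβ0 : β 0 = (1/2 : ℝ) • ((-e 0 - e 1) + (e (2*r-1) + e (2*r))) := by
      have h := hCs 0 (by omega)
      rw [Nat.sub_zero] at h
      simp only [β]
      rw [h, hα0, hα2r1]
    have hβ1 : β 1 = (1/2 : ℝ) • ((e 0 - e 1) + (e (2*r-1) - e (2*r))) := by
      have h := hCs 1 (by omega)
      rw [show 2*r+1-1 = 2*r by omega] at h
      simp only [β]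
      rw [h, hα 1 (by omega) (by omega), hα (2*r) (by omega) (by omega)]
    have hF2 : F 2 = e 1 - e (2*r-1) := by
      simp only [hF]
      rw [show (2:ℕ)-1 = 1 from rfl, show 2*r+1-2 = 2*r-1 by omega]
    have hFr : F (r+1) = 0 := by
      simp only [hF]
      rw [show r+1-1 = r by omega, show 2*r+1-(r+1) = r by omega]
      exact sub_self _
    rw [hβ0, hβ1, hF2, hFr]
    module
end
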